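/- Let n ≥ 1 be an integer and let f satisfy (A1) and (A2) with constant m > 0. If (u,v) is a positive solution of the system −u''(r) − ((n−1)/r) u'(r) = f(r, u(r), v(r)) and −v''(r) − ((n−1)/r) v'(r) = f(r, v(r), u(r)) for r > 0, with u'(0) = v'(0) = 0 and u(r), v(r) → 0 as r → ∞, then there exists c > 0 such that u(r) + v(r) + |u'(r)| + |v'(r)| ≤ c·e^{−√m·r} for all r > 0. -/

import Mathlib

open Real Set Filter

/-- `u` is twice continuously differentiable on `[0,∞)`, with first and second
derivative functions `u'` and `u''`. -/
def C2 (u u' u'' : ℝ → ℝ) : Prop :=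
  (∀ r ∈ Set.Ici (0:ℝ), HasDerivWithinAt u (u' r) (Set.Ici 0) r) ∧
  (∀ r ∈ Set.Ici (0:ℝ), HasDerivWithinAt u' (u'' r) (Set.Ici 0) r) ∧
  ContinuousOn u'' (Set.Ici 0)

/-- Assumption (A1): `f : [0,∞)³ → ℝ` is continuous, locally Lipschitz on `(0,∞)³`,
and satisfies the stated growth bound. -/
def A1 (f : ℝ → ℝ → ℝ → ℝ) : Prop :=
  ContinuousOn (fun p : ℝ × ℝ × ℝ => f p.1 p.2.1 p.2.2)
    {p : ℝ × ℝ × ℝ | 0 ≤ p.1 ∧ 0 ≤ p.2.1 ∧ 0 ≤ p.2.2} ∧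
  (∀ p : ℝ × ℝ × ℝ, 0 < p.1 → 0 < p.2.1 → 0 < p.2.2 →
    ∃ K : NNReal, ∃ δ > 0, LipschitzOnWith K (fun p : ℝ × ℝ × ℝ => f p.1 p.2.1 p.2.2)
      (Metric.ball p δ ∩ {p : ℝ × ℝ × ℝ | 0 < p.1 ∧ 0 < p.2.1 ∧ 0 < p.2.2})) ∧
  (∃ p : ℝ, 1 < p ∧ ∃ C : ℝ, 0 < C ∧ ∀ r z₁ z₂ : ℝ, 0 ≤ r → 0 ≤ z₁ → 0 ≤ z₂ →
    |f r z₁ z₂| ≤ C * (|z₁| + |z₂| + |z₁| ^ p + |z₂| ^ p))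

/-- `(u,v)` (with derivative data) is a positive solution of the radial system
`-u'' - ((n-1)/r) u' = f(r,u,v)`, `-v'' - ((n-1)/r) v' = f(r,v,u)` on `(0,∞)`,
with `u'(0) = v'(0) = 0` and `u(r), v(r) → 0` as `r → ∞`. -/
def IsPosSol (n : ℕ) (f : ℝ → ℝ → ℝ → ℝ) (u u' u'' v v' v'' : ℝ → ℝ) : Prop :=
  C2 u u' u'' ∧ C2 v v' v'' ∧
  (∀ r : ℝ, 0 ≤ r → 0 < u r ∧ 0 < v r) ∧
  (∀ r : ℝ, 0 < r → -u'' r - ((n : ℝ) - 1) / r * u' r = f r (u r) (v r)) ∧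
  (∀ r : ℝ, 0 < r → -v'' r - ((n : ℝ) - 1) / r * v' r = f r (v r) (u r)) ∧
  u' 0 = 0 ∧ v' 0 = 0 ∧
  Tendsto u atTop (nhds 0) ∧ Tendsto v atTop (nhds 0)

/-- Auxiliary: exponential decay of the derivative via MVT + Grönwall. -/
lemma deriv_decay_aux {y y' y'' : ℝ → ℝ} {sm Cf Ay K R₁ : ℝ}
    (hsm : 0 < sm) (hK : 1 ≤ K) (hR₁ : 1 ≤ R₁) (hCf : 0 ≤ Cf) (hAy : 0 ≤ Ay)
    (hyd : ∀ x ∈ Set.Ici (0:ℝ), HasDerivWithinAt y (y' x) (Set.Ici 0) x)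
    (hyd2 : ∀ x ∈ Set.Ici (0:ℝ), HasDerivWithinAt y' (y'' x) (Set.Ici 0) x)
    (hODE : ∀ x, R₁ ≤ x → |y'' x| ≤ K * |y' x| + Cf * Real.exp (-sm * x))
    (hyb : ∀ x, R₁ ≤ x → |y x| ≤ Ay * Real.exp (-sm * x)) :
    ∀ r, R₁ + 1 ≤ r →
      |y' r| ≤ (2 * Ay + Cf) * Real.exp sm * Real.exp K * Real.exp (-sm * r) := by
  intro r hr
  have hr1 : R₁ ≤ r - 1 := by linarith
  have hr0 : (0:ℝ) < r - 1 := by linarith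
  have hcy : ContinuousOn y (Set.Icc (r-1) r) := fun x hx =>
    ((hyd x (le_trans hr0.le hx.1)).continuousWithinAt).mono
      (fun z hz => le_trans hr0.le hz.1)
  have hdy : ∀ x ∈ Set.Ioo (r-1) r, HasDerivAt y (y' x) x := fun x hx =>
    (hyd x (le_of_lt (lt_trans hr0 hx.1))).hasDerivAt
      (Ici_mem_nhds (lt_trans hr0 hx.1))
  obtain ⟨ξ, hξ, hslope⟩ := exists_hasDerivAt_eq_slope y y' (by linarith : r - 1 < r) hcy hdy
  have hξ0 : (0:ℝ) < ξ := lt_trans hr0 hξ.1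
  have hξR : R₁ ≤ ξ := le_of_lt (lt_of_le_of_lt hr1 hξ.1)
  have hyξ : y' ξ = y r - y (r-1) := by
    rw [hslope]; ring_nf
  have hexp_mono : Real.exp (-sm * r) ≤ Real.exp (-sm * (r-1)) := by
    apply Real.exp_le_exp.mpr; nlinarith
  set δ' := 2 * Ay * Real.exp (-sm * (r-1)) with hδ'
  set ε' := Cf * Real.exp (-sm * (r-1)) with hε'
  have hδ'0 : 0 ≤ δ' := by positivity
  have hε'0 : 0 ≤ ε' := by positivity
  have hbξ : |y' ξ| ≤ δ' := by
    rw [hyξ]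
    have h1 := hyb r (by linarith)
    have h2 := hyb (r-1) hr1
    calc |y r - y (r-1)| ≤ |y r| + |y (r-1)| := abs_sub _ _
      _ ≤ Ay * Real.exp (-sm * r) + Ay * Real.exp (-sm * (r-1)) := add_le_add h1 h2
      _ ≤ δ' := by rw [hδ']; nlinarith [Real.exp_pos (-sm * (r-1))]
  have hcy' : ContinuousOn y' (Set.Icc ξ r) := fun x hx =>
    ((hyd2 x (le_trans hξ0.le hx.1)).continuousWithinAt).mono
      (fun z hz => le_trans hξ0.le hz.1)
  have hdy' : ∀ x ∈ Set.Ico ξ r, HasDerivWithinAt y' (y'' x) (Set.Ici x) x := fun x hx =>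
    (hyd2 x (le_trans hξ0.le hx.1)).mono
      (Set.Ici_subset_Ici.mpr (le_trans hξ0.le hx.1))
  have hbound : ∀ x ∈ Set.Ico ξ r, ‖y'' x‖ ≤ K * ‖y' x‖ + ε' := by
    intro x hx
    rw [Real.norm_eq_abs, Real.norm_eq_abs]
    have h1 := hODE x (le_trans hξR hx.1)
    have h2 : Real.exp (-sm * x) ≤ Real.exp (-sm * (r-1)) := by
      apply Real.exp_le_exp.mpr
      have hx1 : r - 1 ≤ x := le_trans hξ.1.le hx.1
      nlinarith
    calc |y'' x| ≤ K * |y' x| + Cf * Real.exp (-sm * x) := h1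
      _ ≤ K * |y' x| + ε' := by rw [hε']; nlinarith
  have hG := norm_le_gronwallBound_of_norm_deriv_right_le (δ := δ') (K := K) (ε := ε') hcy' hdy'
    (by rw [Real.norm_eq_abs]; exact hbξ) hbound r
    ⟨le_of_lt hξ.2, le_refl r⟩
  rw [Real.norm_eq_abs] at hG
  have hK0 : K ≠ 0 := by linarith
  rw [gronwallBound_of_K_ne_0 hK0] at hG
  have ht1 : r - ξ ≤ 1 := by have := hξ.1; linarith
  have ht0 : 0 ≤ r - ξ := by have := hξ.2; linarith
  have hexpK : Real.exp (K * (r - ξ)) ≤ Real.exp K := by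
    apply Real.exp_le_exp.mpr; nlinarith
  have hEK : (0:ℝ) < Real.exp K := Real.exp_pos _
  have key : δ' * Real.exp (K * (r - ξ)) + ε' / K * (Real.exp (K * (r - ξ)) - 1)
      ≤ (δ' + ε') * Real.exp K := by
    have h1 : δ' * Real.exp (K * (r - ξ)) ≤ δ' * Real.exp K :=
      mul_le_mul_of_nonneg_left hexpK hδ'0
    have h2 : ε' / K ≤ ε' := div_le_self hε'0 hK
    have h3 : Real.exp (K * (r - ξ)) - 1 ≤ Real.exp K := by
      nlinarith [Real.exp_pos (K * (r-ξ))]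
    have h4 : 0 ≤ Real.exp (K * (r - ξ)) - 1 := by
      nlinarith [Real.one_le_exp (by positivity : (0:ℝ) ≤ K * (r - ξ))]
    have h5 : ε' / K * (Real.exp (K * (r - ξ)) - 1) ≤ ε' * Real.exp K :=
      mul_le_mul h2 h3 h4 hε'0
    linarith
  have hfin : |y' r| ≤ (δ' + ε') * Real.exp K := le_trans hG key
  have heq : (δ' + ε') * Real.exp K
      = (2 * Ay + Cf) * Real.exp sm * Real.exp K * Real.exp (-sm * r) := by
    rw [hδ', hε']
    have : Real.exp (-sm * (r-1)) = Real.exp sm * Real.exp (-sm * r) := by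
      rw [← Real.exp_add]; ring_nf
    rw [this]; ring
  rw [heq] at hfin
  exact hfin

lemma fsum_le {f : ℝ → ℝ → ℝ → ℝ} {m R ε : ℝ}
    (hA1c : ContinuousOn (fun p : ℝ × ℝ × ℝ => f p.1 p.2.1 p.2.2)
      {p : ℝ × ℝ × ℝ | 0 ≤ p.1 ∧ 0 ≤ p.2.1 ∧ 0 ≤ p.2.2})
    (hA2 : ∀ r > R, ∀ z₁ ∈ Set.Ioo 0 ε, ∀ z₂ ∈ Set.Ioo 0 ε, z₁ ≠ z₂ →
      (f r z₁ z₂ - f r z₂ z₁) / (z₁ - z₂) ≤ -m ∧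
      (f r z₁ z₂ + f r z₂ z₁) / (z₁ + z₂) ≤ -m)
    (hR0 : 0 < R) :
    ∀ r, R < r → ∀ a ∈ Set.Ioo (0:ℝ) ε, ∀ b ∈ Set.Ioo (0:ℝ) ε,
      f r a b + f r b a ≤ -m * (a + b) := by
  have hfc : ∀ r a b : ℝ, 0 < r → 0 < a → 0 < b →
      ContinuousAt (fun p : ℝ × ℝ × ℝ => f p.1 p.2.1 p.2.2) (r, a, b) := by
    intro r a b hr ha hb
    apply (hA1c (r,a,b) ⟨hr.le, ha.le, hb.le⟩).continuousAt
    rw [mem_nhds_iff]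
    refine ⟨{p : ℝ × ℝ × ℝ | 0 < p.1 ∧ 0 < p.2.1 ∧ 0 < p.2.2}, ?_, ?_, ⟨hr, ha, hb⟩⟩
    · intro p hp; exact ⟨hp.1.le, hp.2.1.le, hp.2.2.le⟩
    · exact isOpen_Ioi.prod (isOpen_Ioi.prod isOpen_Ioi)
  intro r hr a ha b hb
  have key : ∀ z₁ ∈ Set.Ioo (0:ℝ) ε, ∀ z₂ ∈ Set.Ioo (0:ℝ) ε, z₁ ≠ z₂ →
      f r z₁ z₂ + f r z₂ z₁ ≤ -m * (z₁ + z₂) := by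
    intro z₁ h₁ z₂ h₂ hne
    have h := (hA2 r hr z₁ h₁ z₂ h₂ hne).2
    have hpos : 0 < z₁ + z₂ := add_pos h₁.1 h₂.1
    have := (div_le_iff₀ hpos).mp h
    linarith
  rcases eq_or_ne a b with heq | hne
  · subst heq
    set φ : ℝ → ℝ := fun t => f r a t + f r t a + m * (a + t) with hφ
    have hrp : 0 < r := lt_trans hR0 hr
    have hφc : ContinuousAt φ a := by
      have c1 : ContinuousAt (fun t : ℝ => f r a t) a := by
        have hin : ContinuousAt (fun t : ℝ => ((r, a, t) : ℝ × ℝ × ℝ)) a := by fun_prop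
        have h2 := Filter.Tendsto.comp (hfc r a a hrp ha.1 ha.1) hin
        exact h2
      have c2 : ContinuousAt (fun t : ℝ => f r t a) a := by
        have hin : ContinuousAt (fun t : ℝ => ((r, t, a) : ℝ × ℝ × ℝ)) a := by fun_prop
        have h2 := Filter.Tendsto.comp (hfc r a a hrp ha.1 ha.1) hin
        exact h2
      exact (c1.add c2).add (continuous_const.mul (continuous_const.add continuous_id)).continuousAt
    have hφle : φ a ≤ 0 := by
      have htends : Tendsto φ (nhdsWithin a {a}ᶜ) (nhds (φ a)) :=
        hφc.continuousWithinAt.tendsto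
      apply le_of_tendsto htends
      have hmem : Set.Ioo (0:ℝ) ε ∈ nhds a := isOpen_Ioo.mem_nhds ha
      filter_upwards [nhdsWithin_le_nhds hmem, self_mem_nhdsWithin] with t ht hta
      have := key a ha t ht (Ne.symm hta)
      simp only [hφ]; linarith
    simp only [hφ] at hφle
    linarith
  · exact key a ha b hb hne

set_option maxHeartbeats 1000000

/-- Exponential decay of positive solutions under (A1) and (A2). -/
theorem exponential_decay (n : ℕ) (hn : 1 ≤ n) (f : ℝ → ℝ → ℝ → ℝ)
    (m R ε : ℝ) (hm : 0 < m) (hR : 0 < R) (hε : 0 < ε)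
    (hA1 : A1 f)
    (hA2 : ∀ r > R, ∀ z₁ ∈ Set.Ioo 0 ε, ∀ z₂ ∈ Set.Ioo 0 ε, z₁ ≠ z₂ →
      (f r z₁ z₂ - f r z₂ z₁) / (z₁ - z₂) ≤ -m ∧
      (f r z₁ z₂ + f r z₂ z₁) / (z₁ + z₂) ≤ -m)
    (u u' u'' v v' v'' : ℝ → ℝ)
    (hsol : IsPosSol n f u u' u'' v v' v'') :
    ∃ c > 0, ∀ r > (0:ℝ),
      u r + v r + |u' r| + |v' r| ≤ c * Real.exp (-Real.sqrt m * r) := by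
  obtain ⟨⟨hud, hud2, _⟩, ⟨hvd, hvd2, _⟩, hpos, hequ, heqv, hu'0, hv'0, hulim, hvlim⟩ := hsol
  obtain ⟨p, hp, C, hC, hgrow⟩ := hA1.2.2
  set sm := Real.sqrt m with hsm_def
  have hsm : 0 < sm := Real.sqrt_pos.mpr hm
  have hsm2 : sm * sm = m := Real.mul_self_sqrt hm.le
  -- Step 1: R₀
  set ε' := min ε 1 with hε'_def
  have hε' : 0 < ε' := lt_min hε one_pos
  have hε'ε : ε' ≤ ε := min_le_left _ _
  have hε'1 : ε' ≤ 1 := min_le_right _ _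
  obtain ⟨R₂, hR₂⟩ := (((hulim.eventually_lt_const hε').and
    (hvlim.eventually_lt_const hε')).and (eventually_ge_atTop (max (R+1) 1))).exists_forall_of_atTop
  set R₀ := max R₂ (max (R+1) 1) with hR₀_def
  have hR₀R : R < R₀ := by
    have : R + 1 ≤ R₀ := le_trans (le_max_left _ _) (le_max_right _ _)
    linarith
  have hR₀1 : (1:ℝ) ≤ R₀ := le_trans (le_max_right _ _) (le_max_right _ _)
  have hR₀0 : (0:ℝ) < R₀ := lt_of_lt_of_le one_pos hR₀1
  have hsmall : ∀ r, R₀ ≤ r → u r < ε' ∧ v r < ε' := by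
    intro r hr
    have := hR₂ r (le_trans (le_max_left _ _) hr)
    exact ⟨this.1.1, this.1.2⟩
  have hrange : ∀ r, R₀ ≤ r → u r ∈ Set.Ioo (0:ℝ) ε ∧ v r ∈ Set.Ioo (0:ℝ) ε := by
    intro r hr
    have h0 : (0:ℝ) ≤ r := le_trans hR₀0.le hr
    exact ⟨⟨(hpos r h0).1, lt_of_lt_of_le (hsmall r hr).1 hε'ε⟩,
           ⟨(hpos r h0).2, lt_of_lt_of_le (hsmall r hr).2 hε'ε⟩⟩
  -- sum inequality
  have hsum := fsum_le hA1.1 hA2 hR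
  -- Step 3: ODE inequality for w = u + v
  have hODEw : ∀ r, R₀ ≤ r →
      m * (u r + v r) ≤ (u'' r + v'' r) + ((n:ℝ)-1)/r * (u' r + v' r) := by
    intro r hr
    have hr0 : 0 < r := lt_of_lt_of_le hR₀0 hr
    have h1 := hequ r hr0
    have h2 := heqv r hr0
    have h3 := hsum r (lt_of_lt_of_le hR₀R hr) (u r) (hrange r hr).1 (v r) (hrange r hr).2
    have h4 : ((n:ℝ)-1)/r * (u' r + v' r) = ((n:ℝ)-1)/r * u' r + ((n:ℝ)-1)/r * v' r :=
      mul_add _ _ _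
    linarith
  -- constant A and comparison function
  set A := (u R₀ + v R₀) * Real.exp (sm * R₀) with hA_def
  have hA : 0 < A := by
    have h1 := hpos R₀ hR₀0.le
    exact mul_pos (by linarith [h1.1, h1.2]) (Real.exp_pos _)
  -- continuity of u, v, u', v' on Ici 0
  have hcu : ContinuousOn u (Set.Ici 0) := fun x hx => (hud x hx).continuousWithinAt
  have hcv : ContinuousOn v (Set.Ici 0) := fun x hx => (hvd x hx).continuousWithinAt
  have hcu' : ContinuousOn u' (Set.Ici 0) := fun x hx => (hud2 x hx).continuousWithinAt
  have hcv' : ContinuousOn v' (Set.Ici 0) := fun x hx => (hvd2 x hx).continuousWithinAt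
  -- g and its derivative data
  set g : ℝ → ℝ := fun r => u r + v r - A * Real.exp (-sm * r) with hg_def
  set gd : ℝ → ℝ := fun r => u' r + v' r + A * sm * Real.exp (-sm * r) with hgd_def
  have hexp_deriv : ∀ x : ℝ, HasDerivAt (fun r => A * Real.exp (-sm * r))
      (-(A * sm * Real.exp (-sm * x))) x := by
    intro x
    have h1 : HasDerivAt (fun r : ℝ => -sm * r) (-sm) x := by
      simpa using (hasDerivAt_id x).const_mul (-sm)
    have h2 := (h1.exp).const_mul A
    exact h2.congr_deriv (by ring)
  have hgderiv : ∀ x, 0 < x → HasDerivAt g (gd x) x := by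
    intro x hx
    have hmem : Set.Ici (0:ℝ) ∈ nhds x := Ici_mem_nhds hx
    have h1 := ((hud x hx.le).hasDerivAt hmem).add ((hvd x hx.le).hasDerivAt hmem)
    have h2 := h1.sub (hexp_deriv x)
    exact h2.congr_deriv (by simp only [hgd_def]; ring)
  have hgdderiv : ∀ x, 0 < x →
      HasDerivAt gd (u'' x + v'' x - A * m * Real.exp (-sm * x)) x := by
    intro x hx
    have hmem : Set.Ici (0:ℝ) ∈ nhds x := Ici_mem_nhds hx
    have h1 := ((hud2 x hx.le).hasDerivAt hmem).add ((hvd2 x hx.le).hasDerivAt hmem)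
    have h3 : HasDerivAt (fun r : ℝ => -sm * r) (-sm) x := by
      simpa using (hasDerivAt_id x).const_mul (-sm)
    have h2 := h1.add ((h3.exp).const_mul (A * sm))
    exact h2.congr_deriv (by rw [← hsm2]; ring)
  -- Step 4: comparison
  have hcomp : ∀ r, R₀ ≤ r → u r + v r ≤ A * Real.exp (-sm * r) := by
    by_contra hcon
    push_neg at hcon
    obtain ⟨r₁, hr₁, hgr₁⟩ := hcon
    have hg1 : 0 < g r₁ := by simp only [hg_def]; linarith
    -- g tends to 0 at top
    have hwlim : Tendsto (fun r => u r + v r) atTop (nhds 0) := by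
      simpa using hulim.add hvlim
    have hexplim : Tendsto (fun r => A * Real.exp (-sm * r)) atTop (nhds 0) := by
      have h1 : Tendsto (fun r : ℝ => sm * r) atTop atTop :=
        Tendsto.const_mul_atTop hsm tendsto_id
      have h2 := Real.tendsto_exp_neg_atTop_nhds_zero.comp h1
      have h3 := h2.const_mul A
      simpa [Function.comp, neg_mul] using h3
    have hglim : Tendsto g atTop (nhds 0) := by
      have h0 := hwlim.sub hexplim
      simp only [sub_zero] at h0
      exact h0
    obtain ⟨T₀, hT₀⟩ := (hglim.eventually_lt_const hg1).exists_forall_of_atTop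
    set T := max T₀ r₁ with hT_def
    have hr₁T : r₁ ≤ T := le_max_right _ _
    have hR₀T : R₀ ≤ T := le_trans hr₁ hr₁T
    have hgc : ContinuousOn g (Set.Icc R₀ T) := by
      apply ContinuousOn.sub
      · exact (hcu.add hcv).mono (fun x hx => le_trans hR₀0.le hx.1)
      · exact (continuous_const.mul
          (Real.continuous_exp.comp (continuous_const.mul continuous_id))).continuousOn
    obtain ⟨r₀, hr₀mem, hr₀max⟩ := isCompact_Icc.exists_isMaxOn
      (Set.nonempty_Icc.mpr hR₀T) hgc
    have hmaxx : ∀ x ∈ Set.Icc R₀ T, g x ≤ g r₀ := hr₀max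
    have hgr₀ : g r₁ ≤ g r₀ := hmaxx r₁ ⟨hr₁, hr₁T⟩
    have hgR₀ : g R₀ = 0 := by
      have he : sm * R₀ + -sm * R₀ = 0 := by ring
      simp only [hg_def, hA_def]
      rw [mul_assoc, ← Real.exp_add, he, Real.exp_zero, mul_one]
      ring
    have hr₀R₀ : R₀ < r₀ := by
      rcases lt_or_eq_of_le hr₀mem.1 with h | h
      · exact h
      · exfalso; rw [h] at hgR₀; linarith
    have hr₀pos : (0:ℝ) < r₀ := lt_trans hR₀0 hr₀R₀
    -- global max
    have hmax' : ∀ x, R₀ ≤ x → g x ≤ g r₀ := by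
      intro x hx
      rcases le_or_gt x T with h | h
      · exact hmaxx x ⟨hx, h⟩
      · have : T₀ ≤ x := le_trans (le_max_left _ _) h.le
        exact le_trans (hT₀ x this).le hgr₀
    -- local max, first derivative zero
    have hlocmax : IsLocalMax g r₀ := by
      have hmem : Set.Ioi R₀ ∈ nhds r₀ := isOpen_Ioi.mem_nhds hr₀R₀
      exact eventually_of_mem hmem (fun x hx => hmax' x (le_of_lt hx))
    have hgd0 : gd r₀ = 0 := hlocmax.hasDerivAt_eq_zero (hgderiv r₀ hr₀pos)
    have hw'r₀ : u' r₀ + v' r₀ ≤ 0 := by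
      have : A * sm * Real.exp (-sm * r₀) > 0 := by positivity
      simp only [hgd_def] at hgd0
      linarith
    -- second derivative positive
    have hg₀pos : 0 < g r₀ := lt_of_lt_of_le hg1 hgr₀
    have hD : 0 < u'' r₀ + v'' r₀ - A * m * Real.exp (-sm * r₀) := by
      have h1 := hODEw r₀ (le_of_lt hr₀R₀)
      have h2 : ((n:ℝ)-1)/r₀ * (u' r₀ + v' r₀) ≤ 0 := by
        apply mul_nonpos_of_nonneg_of_nonpos _ hw'r₀
        apply div_nonneg _ hr₀pos.le
        have : (1:ℝ) ≤ (n:ℝ) := by exact_mod_cast hn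
        linarith
      have h3 : 0 < m * g r₀ := mul_pos hm hg₀pos
      have h4 : m * g r₀ = m * (u r₀ + v r₀) - m * (A * Real.exp (-sm * r₀)) := by
        simp only [hg_def]; ring
      nlinarith
    -- gd increases through zero: contradiction
    have hslope := (hasDerivAt_iff_tendsto_slope.mp (hgdderiv r₀ hr₀pos))
    have hslope' : Tendsto (slope gd r₀) (nhdsWithin r₀ (Set.Ioi r₀))
        (nhds (u'' r₀ + v'' r₀ - A * m * Real.exp (-sm * r₀))) :=
      hslope.mono_left (nhdsWithin_mono r₀ (fun x hx => ne_of_gt hx))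
    have hev : ∀ᶠ x in nhdsWithin r₀ (Set.Ioi r₀), 0 < slope gd r₀ x :=
      hslope'.eventually (eventually_gt_nhds hD)
    obtain ⟨b, hb, hsub⟩ := mem_nhdsGT_iff_exists_Ioo_subset.mp hev
    have hgdpos : ∀ x ∈ Set.Ioo r₀ b, 0 < gd x := by
      intro x hx
      have hs := hsub hx
      simp only [Set.mem_setOf_eq] at hs
      rw [slope_def_field] at hs
      have hx0 : 0 < x - r₀ := by have := hx.1; linarith
      have := (div_pos_iff.mp hs)
      rcases this with ⟨h1, _⟩ | ⟨_, h2⟩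
      · rw [hgd0] at h1; linarith [h1]
      · linarith
    set b' := (r₀ + b) / 2 with hb'_def
    have hb'1 : r₀ < b' := by simp only [hb'_def]; have := hb; simp at this; linarith
    have hb'2 : b' < b := by simp only [hb'_def]; have := hb; simp at this; linarith
    have hmono : StrictMonoOn g (Set.Icc r₀ b') := by
      apply strictMonoOn_of_deriv_pos (convex_Icc _ _)
      · apply ContinuousOn.sub
        · exact (hcu.add hcv).mono (fun x hx => le_trans hr₀pos.le hx.1)
        · exact (continuous_const.mul
            (Real.continuous_exp.comp (continuous_const.mul continuous_id))).continuousOn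
      · intro x hx
        rw [interior_Icc] at hx
        rw [(hgderiv x (lt_trans hr₀pos hx.1)).deriv]
        exact hgdpos x ⟨hx.1, lt_trans hx.2 hb'2⟩
    have hlt : g r₀ < g b' := hmono (Set.left_mem_Icc.mpr hb'1.le)
      (Set.right_mem_Icc.mpr hb'1.le) hb'1
    have := hmax' b' (le_trans hr₀R₀.le hb'1.le)
    linarith
  -- |f| bound for small arguments
  have hrpow : ∀ z : ℝ, 0 < z → z ≤ 1 → |z| ^ p ≤ z := by
    intro z hz hz1
    rw [abs_of_pos hz]
    nth_rewrite 2 [← Real.rpow_one z]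
    exact Real.rpow_le_rpow_of_exponent_ge hz hz1 hp.le
  have hfb : ∀ x, R₀ ≤ x → |f x (u x) (v x)| ≤ 2*C*A * Real.exp (-sm * x) ∧
      |f x (v x) (u x)| ≤ 2*C*A * Real.exp (-sm * x) := by
    intro x hx
    have hx0 : (0:ℝ) ≤ x := le_trans hR₀0.le hx
    have hu0 := (hpos x hx0).1
    have hv0 := (hpos x hx0).2
    have hus : u x ≤ 1 := le_of_lt (lt_of_lt_of_le (hsmall x hx).1 hε'1)
    have hvs : v x ≤ 1 := le_of_lt (lt_of_lt_of_le (hsmall x hx).2 hε'1)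
    have h1 := hrpow (u x) hu0 hus
    have h2 := hrpow (v x) hv0 hvs
    have hau : |u x| = u x := abs_of_pos hu0
    have hav : |v x| = v x := abs_of_pos hv0
    have hwb := hcomp x hx
    have hg1 := hgrow x (u x) (v x) hx0 hu0.le hv0.le
    have hg2 := hgrow x (v x) (u x) hx0 hv0.le hu0.le
    rw [hau, hav] at hg1 hg2
    have hkey : C * (u x + v x + u x + v x) ≤ 2*C*A * Real.exp (-sm * x) := by
      have : C * (u x + v x + u x + v x) = 2*C * (u x + v x) := by ring
      rw [this]
      have h3 : 2*C * (u x + v x) ≤ 2*C * (A * Real.exp (-sm * x)) :=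
        mul_le_mul_of_nonneg_left hwb (by linarith)
      linarith [h3]
    constructor
    · calc |f x (u x) (v x)| ≤ C * (u x + v x + u x ^ p + v x ^ p) := hg1
        _ ≤ C * (u x + v x + u x + v x) := by
            rw [hau] at h1; rw [hav] at h2; nlinarith
        _ ≤ 2*C*A * Real.exp (-sm * x) := hkey
    · calc |f x (v x) (u x)| ≤ C * (v x + u x + v x ^ p + u x ^ p) := hg2
        _ ≤ C * (u x + v x + u x + v x) := by
            rw [hau] at h1; rw [hav] at h2; nlinarith
        _ ≤ 2*C*A * Real.exp (-sm * x) := hkey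
  -- ODE bounds for the derivatives
  have hK1 : (1:ℝ) ≤ (n:ℝ) := by exact_mod_cast hn
  have hcoef : ∀ x : ℝ, R₀ ≤ x → 0 ≤ ((n:ℝ)-1)/x ∧ ((n:ℝ)-1)/x ≤ (n:ℝ) := by
    intro x hx
    have hx1 : (1:ℝ) ≤ x := le_trans hR₀1 hx
    constructor
    · exact div_nonneg (by linarith) (by linarith)
    · have : ((n:ℝ)-1)/x ≤ (n:ℝ)-1 := div_le_self (by linarith) hx1
      linarith
  have hODEu : ∀ x, R₀ ≤ x → |u'' x| ≤ (n:ℝ) * |u' x| + (2*C*A) * Real.exp (-sm * x) := by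
    intro x hx
    have hx0 : 0 < x := lt_of_lt_of_le hR₀0 hx
    have h1 := hequ x hx0
    have h2 : u'' x = -(((n:ℝ)-1)/x * u' x) - f x (u x) (v x) := by linarith
    have h3 : |u'' x| ≤ ((n:ℝ)-1)/x * |u' x| + |f x (u x) (v x)| := by
      rw [h2]
      calc |(-(((n:ℝ)-1)/x * u' x)) - f x (u x) (v x)|
          ≤ |(-(((n:ℝ)-1)/x * u' x))| + |f x (u x) (v x)| := abs_sub _ _
        _ = ((n:ℝ)-1)/x * |u' x| + |f x (u x) (v x)| := by
            rw [abs_neg, abs_mul, abs_of_nonneg (hcoef x hx).1]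
    have h4 := mul_le_mul_of_nonneg_right (hcoef x hx).2 (abs_nonneg (u' x))
    have h5 := (hfb x hx).1
    linarith
  have hODEv : ∀ x, R₀ ≤ x → |v'' x| ≤ (n:ℝ) * |v' x| + (2*C*A) * Real.exp (-sm * x) := by
    intro x hx
    have hx0 : 0 < x := lt_of_lt_of_le hR₀0 hx
    have h1 := heqv x hx0
    have h2 : v'' x = -(((n:ℝ)-1)/x * v' x) - f x (v x) (u x) := by linarith
    have h3 : |v'' x| ≤ ((n:ℝ)-1)/x * |v' x| + |f x (v x) (u x)| := by
      rw [h2]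
      calc |(-(((n:ℝ)-1)/x * v' x)) - f x (v x) (u x)|
          ≤ |(-(((n:ℝ)-1)/x * v' x))| + |f x (v x) (u x)| := abs_sub _ _
        _ = ((n:ℝ)-1)/x * |v' x| + |f x (v x) (u x)| := by
            rw [abs_neg, abs_mul, abs_of_nonneg (hcoef x hx).1]
    have h4 := mul_le_mul_of_nonneg_right (hcoef x hx).2 (abs_nonneg (v' x))
    have h5 := (hfb x hx).2
    linarith
  have hub : ∀ x, R₀ ≤ x → |u x| ≤ A * Real.exp (-sm * x) := by
    intro x hx
    have hx0 : (0:ℝ) ≤ x := le_trans hR₀0.le hx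
    rw [abs_of_pos (hpos x hx0).1]
    have := (hpos x hx0).2
    linarith [hcomp x hx]
  have hvb : ∀ x, R₀ ≤ x → |v x| ≤ A * Real.exp (-sm * x) := by
    intro x hx
    have hx0 : (0:ℝ) ≤ x := le_trans hR₀0.le hx
    rw [abs_of_pos (hpos x hx0).2]
    have := (hpos x hx0).1
    linarith [hcomp x hx]
  have hCA : (0:ℝ) ≤ 2*C*A := by positivity
  set B := (2 * A + 2*C*A) * Real.exp sm * Real.exp (n:ℝ) with hB_def
  have hBpos : 0 < B := by
    have : 0 < 2 * A + 2*C*A := by nlinarith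
    positivity
  have hu'b := deriv_decay_aux hsm hK1 hR₀1 hCA hA.le hud hud2 hODEu hub
  have hv'b := deriv_decay_aux hsm hK1 hR₀1 hCA hA.le hvd hvd2 hODEv hvb
  -- endgame: compact part
  set R₃ := R₀ + 1 with hR₃_def
  have hR₃0 : (0:ℝ) ≤ R₃ := by linarith
  have hch : ContinuousOn (fun r => u r + v r + |u' r| + |v' r|) (Set.Icc 0 R₃) :=
    (((hcu.add hcv).add hcu'.abs).add hcv'.abs).mono (fun x hx => hx.1)
  obtain ⟨x₀, hx₀mem, hx₀max⟩ := isCompact_Icc.exists_isMaxOn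
    (Set.nonempty_Icc.mpr hR₃0) hch
  set M := u x₀ + v x₀ + |u' x₀| + |v' x₀| with hM_def
  have hM0 : 0 ≤ M := by
    have h1 := hpos x₀ hx₀mem.1
    have := abs_nonneg (u' x₀)
    have := abs_nonneg (v' x₀)
    simp only [hM_def]
    linarith [h1.1, h1.2]
  refine ⟨max (A + 2*B) (M * Real.exp (sm * R₃) + 1), ?_, ?_⟩
  · exact lt_of_lt_of_le (by linarith) (le_max_left _ _)
  · intro r hr
    rcases le_or_gt r R₃ with hcase | hcase
    · have hhr : u r + v r + |u' r| + |v' r| ≤ M := hx₀max ⟨hr.le, hcase⟩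
      have e1 : Real.exp (sm * R₃) * Real.exp (-sm * R₃) = 1 := by
        rw [← Real.exp_add]
        have : sm * R₃ + -sm * R₃ = 0 := by ring
        rw [this, Real.exp_zero]
      have e2 : Real.exp (-sm * R₃) ≤ Real.exp (-sm * r) := by
        apply Real.exp_le_exp.mpr; nlinarith
      have hMe : 0 ≤ M * Real.exp (sm * R₃) := mul_nonneg hM0 (Real.exp_pos _).le
      calc u r + v r + |u' r| + |v' r| ≤ M := hhr
        _ = M * Real.exp (sm * R₃) * Real.exp (-sm * R₃) := by
            rw [mul_assoc, e1, mul_one]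
        _ ≤ M * Real.exp (sm * R₃) * Real.exp (-sm * r) :=
            mul_le_mul_of_nonneg_left e2 hMe
        _ ≤ (M * Real.exp (sm * R₃) + 1) * Real.exp (-sm * r) :=
            mul_le_mul_of_nonneg_right (by linarith) (Real.exp_pos _).le
        _ ≤ max (A + 2*B) (M * Real.exp (sm * R₃) + 1) * Real.exp (-sm * r) :=
            mul_le_mul_of_nonneg_right (le_max_right _ _) (Real.exp_pos _).le
    · have hrR : R₀ + 1 ≤ r := le_of_lt hcase
      have h1 := hcomp r (by linarith)
      have h2 := hu'b r hrR
      have h3 := hv'b r hrR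
      rw [← hB_def] at h2 h3
      have h4 : u r + v r + |u' r| + |v' r| ≤ (A + 2*B) * Real.exp (-sm * r) := by
        have : (A + 2*B) * Real.exp (-sm * r)
            = A * Real.exp (-sm * r) + B * Real.exp (-sm * r) + B * Real.exp (-sm * r) := by ring
        rw [this]
        linarith
      have h5 := mul_le_mul_of_nonneg_right
        (le_max_left (A + 2*B) (M * Real.exp (sm * R₃) + 1)) (Real.exp_pos (-sm * r)).le
      linarith
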